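/- arXiv:1812.09457 — 3 statements merged into one kernel-verified Lean document; each statement's English description precedes it below -/
import Mathlib

section
/- For every integer n ≥ 3, ∫_{ℝⁿ} ((1−‖x‖²)/(1+‖x‖²)^{n+1})·log(1/(1+‖x‖²)) dx = π^{n/2}·Γ(n/2)/(n·Γ(n)); in particular this integral is strictly positive, so the constant \tilde c₁ = ((n−2)²/4) times this integral (appearing in Lemma 5.3 and Theorem 6.3) is strictly positive. (For n = 4 the integral equals π²/24 = ω₄/48 and for n = 5 it equals π³/160, consistent with the explicit constants 2√(3ω₄) and 512/(9π) computed in the proof of Theorem 6.3.) -/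
open MeasureTheory

open Real Set intervalIntegral Filter

lemma real_beta {u v : ℝ} (hu : 0 < u) (hv : 0 < v) :
    ∫ x in (0:ℝ)..1, x ^ (u - 1) * (1 - x) ^ (v - 1) =
      Real.Gamma u * Real.Gamma v / Real.Gamma (u + v) := by
  have h1 : Complex.betaIntegral u v =
      ((∫ x in (0:ℝ)..1, x ^ (u - 1) * (1 - x) ^ (v - 1) : ℝ) : ℂ) := by
    rw [Complex.betaIntegral, ← intervalIntegral.integral_ofReal]
    refine intervalIntegral.integral_congr fun x hx => ?_
    rw [uIcc_of_le zero_le_one] at hx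
    push_cast
    rw [Complex.ofReal_cpow hx.1, Complex.ofReal_cpow (by linarith [hx.2] : (0:ℝ) ≤ 1 - x)]
    push_cast
    ring
  have h2 := Complex.Gamma_mul_Gamma_eq_betaIntegral
    (s := (u:ℂ)) (t := (v:ℂ)) (by simpa using hu) (by simpa using hv)
  rw [h1] at h2
  have h3 : ((Real.Gamma u * Real.Gamma v : ℝ) : ℂ) =
      ((Real.Gamma (u + v) * ∫ x in (0:ℝ)..1, x ^ (u - 1) * (1 - x) ^ (v - 1) : ℝ) : ℂ) := by
    push_cast
    rw [Complex.Gamma_ofReal, Complex.Gamma_ofReal, ← Complex.ofReal_add, Complex.Gamma_ofReal] at h2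
    exact_mod_cast h2
  have h4 := Complex.ofReal_injective h3
  have hG : Real.Gamma (u + v) ≠ 0 := (Real.Gamma_pos_of_pos (by linarith)).ne'
  field_simp [h4]
  linarith [h4]

lemma key_interval {a : ℝ} (ha : 1 < a) :
    ∫ v in (0:ℝ)..1, v ^ (a - 1) * (1 - v) ^ (a - 1) * (2 * v - 1) * Real.log v =
      Real.Gamma a * Real.Gamma (a + 1) / (a * Real.Gamma (2 * a + 1)) := by
  have ha0 : (0:ℝ) < a := by linarith
  have ha1 : (0:ℝ) < a - 1 := by linarith
  set q : ℝ → ℝ := fun t => t ^ (a - 1) * (1 - t) ^ a with hq_def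
  have hq : Continuous q :=
    (Real.continuous_rpow_const ha1.le).mul
      ((Real.continuous_rpow_const ha0.le).comp (continuous_const.sub continuous_id))
  set A : ℝ → ℝ := fun w => ∫ t in (0:ℝ)..w, q t with hA_def
  have hA : ∀ w : ℝ, HasDerivAt A (q w) w := fun w =>
    intervalIntegral.integral_hasDerivAt_right (hq.intervalIntegrable _ _)
      ⟨univ, Filter.univ_mem, hq.aestronglyMeasurable.restrict⟩ hq.continuousAt
  set P : ℝ → ℝ := fun w => w ^ a * (1 - w) ^ a * Real.log w with hP_def
  have hP0 : P 0 = 0 := by simp [hP_def, Real.zero_rpow ha0.ne']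
  have hconst : Continuous (fun w : ℝ => (1 - w) ^ a) :=
    (Real.continuous_rpow_const ha0.le).comp (continuous_const.sub continuous_id)
  have hPc : ContinuousOn P (Icc 0 1) := by
    intro w hw
    rcases eq_or_ne w 0 with rfl | hw0
    · have key : Tendsto P (nhdsWithin 0 (Ioi 0)) (nhds 0) := by
        have h2 : Tendsto (fun w : ℝ => (1 - w) ^ a) (nhdsWithin 0 (Ioi 0)) (nhds 1) := by
          have := hconst.continuousAt (x := 0)
          simp only [ContinuousAt, sub_zero, Real.one_rpow] at this
          exact this.mono_left nhdsWithin_le_nhds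
        have := (tendsto_log_mul_rpow_nhdsGT_zero ha0).mul h2
        rw [zero_mul] at this
        exact this.congr fun x => by simp only [hP_def]; ring
      have h3 : Tendsto P (nhdsWithin 0 (Ici 0)) (nhds 0) := by
        rw [show Ici (0:ℝ) = Ioi 0 ∪ {0} by rw [union_comm, ← Ioi_insert]; rfl,
          nhdsWithin_union, nhdsWithin_singleton]
        rw [tendsto_sup]
        exact ⟨key, by simpa [hP0] using tendsto_pure_nhds P 0⟩
      have := h3.mono_left (nhdsWithin_mono _ (Icc_subset_Ici_self : Icc (0:ℝ) 1 ⊆ Ici 0))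
      simpa [ContinuousWithinAt, hP0] using this
    · exact (((Real.continuous_rpow_const ha0.le).mul hconst).continuousAt.mul
        (Real.continuousAt_log hw0)).continuousWithinAt
  set h : ℝ → ℝ := fun w => (-a) * (w ^ (a - 1) * (1 - w) ^ (a - 1) * (2 * w - 1) * Real.log w)
    with hh_def
  set H : ℝ → ℝ := fun w => P w - A w with hH_def
  have hAc : Continuous A := continuous_iff_continuousAt.2 fun w => (hA w).continuousAt
  have hHc : ContinuousOn H (Icc 0 1) := hPc.sub hAc.continuousOn
  have hderiv : ∀ w ∈ Ioo (0:ℝ) 1, HasDerivAt H (h w) w := by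
    intro w hw
    have hw0 : w ≠ 0 := hw.1.ne'
    have hw1 : (1:ℝ) - w ≠ 0 := by have := hw.2; intro hc; simp only [sub_eq_zero] at hc; linarith
    have d1 : HasDerivAt (fun w : ℝ => w ^ a) (a * w ^ (a - 1)) w :=
      Real.hasDerivAt_rpow_const (Or.inl hw0)
    have d2 : HasDerivAt (fun w : ℝ => (1 - w) ^ a) (-1 * a * (1 - w) ^ (a - 1)) w := by
      have base : HasDerivAt (fun w : ℝ => 1 - w) (-1) w := (hasDerivAt_id w).const_sub 1
      exact base.rpow_const (Or.inl hw1)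
    have d3 : HasDerivAt Real.log w⁻¹ w := Real.hasDerivAt_log hw0
    have dP : HasDerivAt P
        ((a * w ^ (a - 1) * (1 - w) ^ a + w ^ a * (-1 * a * (1 - w) ^ (a - 1))) * Real.log w
          + w ^ a * (1 - w) ^ a * w⁻¹) w := (d1.mul d2).mul d3
    have dH : HasDerivAt (fun w => P w - A w) _ w := dP.sub (hA w)
    have e1 : w ^ a = w ^ (a - 1) * w := by
      conv_lhs => rw [show a = a - 1 + 1 by ring]
      rw [Real.rpow_add_one hw0]
    have e2 : (1 - w) ^ a = (1 - w) ^ (a - 1) * (1 - w) := by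
      conv_lhs => rw [show a = a - 1 + 1 by ring]
      rw [Real.rpow_add_one hw1]
    convert dH using 1
    simp only [hh_def, hq_def]
    rw [e1, e2]
    field_simp
    ring
  have hint : IntervalIntegrable h volume 0 1 := by
    rw [intervalIntegrable_iff_integrableOn_Ioc_of_le zero_le_one]
    have hmeas : AEStronglyMeasurable h (volume.restrict (Ioc (0:ℝ) 1)) := by
      apply Measurable.aestronglyMeasurable
      exact (((((Real.continuous_rpow_const ha1.le).measurable).mul
        ((Real.continuous_rpow_const ha1.le).comp
          (continuous_const.sub continuous_id)).measurable).mul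
        ((measurable_const.mul measurable_id).sub measurable_const)).mul
        Real.measurable_log).const_mul _
    refine Integrable.mono' (integrable_const (a / (a - 1))) hmeas ?_
    refine (ae_restrict_iff' measurableSet_Ioc).2 (Filter.Eventually.of_forall fun w hw => ?_)
    have hw0 : 0 < w := hw.1
    have hw1 : w ≤ 1 := hw.2
    have b1 : |Real.log w| ≤ (w ^ (a - 1))⁻¹ / (a - 1) := by
      rw [abs_of_nonpos (Real.log_nonpos hw0.le hw1), ← Real.log_inv]
      calc Real.log w⁻¹ ≤ (w⁻¹) ^ (a - 1) / (a - 1) :=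
            Real.log_le_rpow_div (inv_nonneg.2 hw0.le) ha1
        _ = (w ^ (a - 1))⁻¹ / (a - 1) := by rw [← Real.inv_rpow hw0.le]
    have b2 : (1 - w) ^ (a - 1) ≤ 1 :=
      Real.rpow_le_one (by linarith) (by linarith) ha1.le
    have b3 : |2 * w - 1| ≤ 1 := abs_le.2 ⟨by linarith, by linarith⟩
    have hwp : (0:ℝ) < w ^ (a - 1) := Real.rpow_pos_of_pos hw0 _
    have hrn : (0:ℝ) ≤ (1 - w) ^ (a - 1) := Real.rpow_nonneg (by linarith) _
    rw [Real.norm_eq_abs, hh_def]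
    simp only
    rw [abs_mul, abs_neg, abs_of_pos ha0, abs_mul, abs_mul, abs_mul,
      abs_of_pos hwp, abs_of_nonneg hrn]
    have k1 : w ^ (a - 1) * |Real.log w| ≤ 1 / (a - 1) := by
      calc w ^ (a - 1) * |Real.log w| ≤ w ^ (a - 1) * ((w ^ (a - 1))⁻¹ / (a - 1)) :=
            mul_le_mul_of_nonneg_left b1 hwp.le
        _ = 1 / (a - 1) := by field_simp
    have k2 : (1 - w) ^ (a - 1) * |2 * w - 1| ≤ 1 := by
      calc (1 - w) ^ (a - 1) * |2 * w - 1| ≤ 1 * 1 :=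
            mul_le_mul b2 b3 (abs_nonneg _) zero_le_one
        _ = 1 := one_mul 1
    have k3 : w ^ (a - 1) * (1 - w) ^ (a - 1) * |2 * w - 1| * |Real.log w|
        = (w ^ (a - 1) * |Real.log w|) * ((1 - w) ^ (a - 1) * |2 * w - 1|) := by ring
    rw [k3]
    calc a * ((w ^ (a - 1) * |Real.log w|) * ((1 - w) ^ (a - 1) * |2 * w - 1|))
        ≤ a * (1 / (a - 1) * 1) := by
          apply mul_le_mul_of_nonneg_left _ ha0.le
          exact mul_le_mul k1 k2 (by positivity) (by positivity)
      _ = a / (a - 1) := by field_simp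
  have hFTC : ∫ w in (0:ℝ)..1, h w = H 1 - H 0 :=
    intervalIntegral.integral_eq_sub_of_hasDeriv_right_of_le zero_le_one hHc
      (fun w hw => (hderiv w hw).hasDerivWithinAt) hint
  have hH1 : H 1 = -A 1 := by
    simp [hH_def, hP_def, Real.zero_rpow ha0.ne']
  have hH0 : H 0 = 0 := by
    simp [hH_def, hP_def, hA_def, Real.zero_rpow ha0.ne']
  have hA1 : A 1 = Real.Gamma a * Real.Gamma (a + 1) / Real.Gamma (2 * a + 1) := by
    have := real_beta ha0 (by linarith : (0:ℝ) < a + 1)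
    rw [hA_def]
    simp only [hq_def]
    rw [show a + (a + 1) = 2 * a + 1 by ring] at this
    rw [← this]
    congr 1
    ext t
    rw [show a + 1 - 1 = a by ring]
  have hsplit : ∫ w in (0:ℝ)..1, h w = (-a) * ∫ v in (0:ℝ)..1,
      v ^ (a - 1) * (1 - v) ^ (a - 1) * (2 * v - 1) * Real.log v := by
    simp only [hh_def]
    rw [← intervalIntegral.integral_const_mul]
  have hI : ∫ v in (0:ℝ)..1, v ^ (a - 1) * (1 - v) ^ (a - 1) * (2 * v - 1) * Real.log v
      = A 1 / a := by
    have hEq : (-a) * ∫ v in (0:ℝ)..1,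
        v ^ (a - 1) * (1 - v) ^ (a - 1) * (2 * v - 1) * Real.log v = -A 1 := by
      rw [← hsplit, hFTC, hH1, hH0, sub_zero]
    rw [eq_div_iff ha0.ne']
    linear_combination (-1 : ℝ) * hEq
  rw [hI, hA1]
  field_simp

section
variable {a : ℝ}

lemma cov_lemma (m : ℕ) :
    ∫ y in Ioi (0:ℝ), y ^ (m + 2 : ℕ) •
        ((1 - y ^ 2) / (1 + y ^ 2) ^ (m + 4 : ℕ) * Real.log (1 / (1 + y ^ 2))) =
      ∫ v in (0:ℝ)..1, (1/2) * (v ^ ((m + 3 : ℝ)/2 - 1) * (1 - v) ^ ((m + 3 : ℝ)/2 - 1) *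
        (2 * v - 1) * Real.log v) := by
  set n : ℕ := m + 3 with hn_def
  set a : ℝ := (n : ℝ) / 2 with ha_def
  set φ : ℝ → ℝ := fun y => (1 + y ^ 2)⁻¹ with hφ_def
  set φ' : ℝ → ℝ := fun y => -(2 * y) / (1 + y ^ 2) ^ 2 with hφ'_def
  set g : ℝ → ℝ := fun v => (1/2) * (v ^ (a - 1) * (1 - v) ^ (a - 1) *
    (2 * v - 1) * Real.log v) with hg_def
  have hs : ∀ y : ℝ, (0:ℝ) < 1 + y ^ 2 := fun y => by positivity
  have hφd : ∀ y ∈ Ioi (0:ℝ), HasDerivWithinAt φ (φ' y) (Ioi 0) y := by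
    intro y hy
    have h1 : HasDerivAt (fun y : ℝ => 1 + y ^ 2) (2 * y) y := by
      simpa using (hasDerivAt_pow 2 y).const_add 1
    have := h1.inv (hs y).ne'
    exact this.hasDerivWithinAt
  have hinj : InjOn φ (Ioi 0) := by
    intro y1 h1 y2 h2 he
    simp only [hφ_def] at he
    have := inv_injective he
    have hsq : y1 ^ 2 = y2 ^ 2 := by linarith [this]
    have : y1 = Real.sqrt (y1 ^ 2) := (Real.sqrt_sq h1.out.le).symm
    rw [this, hsq, Real.sqrt_sq h2.out.le]
  have himg : φ '' Ioi 0 = Ioo 0 1 := by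
    ext v
    constructor
    · rintro ⟨y, hy, rfl⟩
      have hy0 : (0:ℝ) < y := hy
      refine ⟨by positivity, ?_⟩
      rw [hφ_def]
      have h1 : (1:ℝ) < 1 + y ^ 2 := by nlinarith
      simpa using inv_lt_one_of_one_lt₀ h1
    · intro hv
      have hv0 := hv.1
      have hv1 := hv.2
      have hvi : (1:ℝ) < v⁻¹ := (one_lt_inv₀ hv0).2 hv1
      refine ⟨Real.sqrt (v⁻¹ - 1), ?_, ?_⟩
      · exact Real.sqrt_pos.2 (by linarith)
      · simp only [hφ_def]
        rw [Real.sq_sqrt (by linarith)]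
        rw [show 1 + (v⁻¹ - 1) = v⁻¹ by ring, inv_inv]
  have cov := integral_image_eq_integral_abs_deriv_smul measurableSet_Ioi hφd hinj g
  rw [himg] at cov
  have hpt : ∀ y ∈ Ioi (0:ℝ), |φ' y| • g (φ y) =
      y ^ (m + 2 : ℕ) •
        ((1 - y ^ 2) / (1 + y ^ 2) ^ (m + 4 : ℕ) * Real.log (1 / (1 + y ^ 2))) := by
    intro y hy
    have hy0 : (0:ℝ) < y := hy
    have hsy := hs y
    set s : ℝ := 1 + y ^ 2 with hs_def
    have habs : |φ' y| = 2 * y / s ^ 2 := by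
      rw [hφ'_def]
      rw [abs_div, abs_neg, abs_of_nonneg (by positivity : (0:ℝ) ≤ 2 * y),
        abs_of_nonneg (by positivity : (0:ℝ) ≤ s ^ 2)]
    have hv0 : (0:ℝ) < s⁻¹ := by positivity
    have hv1 : s⁻¹ ≤ 1 := by
      rw [inv_le_one_iff₀]; right; nlinarith
    have epair : (s⁻¹) ^ (a - 1) * (1 - s⁻¹) ^ (a - 1) = (y / s) ^ (m + 1 : ℕ) := by
      rw [← Real.mul_rpow hv0.le (by linarith)]
      have h1 : s⁻¹ * (1 - s⁻¹) = (y / s) ^ (2:ℕ) := by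
        field_simp
        ring
      rw [h1, ← Real.rpow_natCast (y / s) 2, ← Real.rpow_mul (by positivity)]
      rw [show ((2:ℕ):ℝ) * (a - 1) = ((m + 1 : ℕ) : ℝ) by
        rw [ha_def, hn_def]; push_cast; ring]
      rw [Real.rpow_natCast]
    have h2v : 2 * s⁻¹ - 1 = (1 - y ^ 2) / s := by
      field_simp
      ring
    simp only [smul_eq_mul, hg_def, hφ_def, habs, ← hs_def, epair, h2v]
    rw [show Real.log (1 / s) = Real.log s⁻¹ by rw [one_div]]
    rw [div_pow]
    have hyne : y ≠ 0 := hy0.ne'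
    have hsne : s ≠ 0 := hsy.ne'
    field_simp
    ring
  rw [setIntegral_congr_fun measurableSet_Ioi hpt] at cov
  rw [← cov, intervalIntegral.integral_of_le zero_le_one, integral_Ioc_eq_integral_Ioo]
  congr 1 with v
  simp only [hg_def, ha_def, hn_def]
  push_cast
  ring_nf

end
/-- `∫_{ℝⁿ} ((1−‖x‖²)/(1+‖x‖²)^{n+1})·log(1/(1+‖x‖²)) dx = π^{n/2}·Γ(n/2)/(n·Γ(n))`
for `n ≥ 3`; in particular this integral is strictly positive. -/
theorem integral_log_weight_eq_and_pos (n : ℕ) (hn : 3 ≤ n) :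
    (∫ x : EuclideanSpace ℝ (Fin n),
        ((1 - ‖x‖ ^ 2) / (1 + ‖x‖ ^ 2) ^ (n + 1)) * Real.log (1 / (1 + ‖x‖ ^ 2))) =
      Real.pi ^ ((n : ℝ) / 2) * Real.Gamma ((n : ℝ) / 2) /
        ((n : ℝ) * Real.Gamma (n : ℝ)) ∧
    0 < ∫ x : EuclideanSpace ℝ (Fin n),
        ((1 - ‖x‖ ^ 2) / (1 + ‖x‖ ^ 2) ^ (n + 1)) * Real.log (1 / (1 + ‖x‖ ^ 2)) := by
  obtain ⟨m, rfl⟩ : ∃ m, n = m + 3 := ⟨n - 3, by omega⟩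
  have hmain : (∫ x : EuclideanSpace ℝ (Fin (m + 3)),
        ((1 - ‖x‖ ^ 2) / (1 + ‖x‖ ^ 2) ^ (m + 3 + 1)) * Real.log (1 / (1 + ‖x‖ ^ 2))) =
      Real.pi ^ (((m + 3 : ℕ) : ℝ) / 2) * Real.Gamma (((m + 3 : ℕ) : ℝ) / 2) /
        (((m + 3 : ℕ) : ℝ) * Real.Gamma ((m + 3 : ℕ) : ℝ)) := by
    set F : ℝ → ℝ := fun r =>
      (1 - r ^ 2) / (1 + r ^ 2) ^ (m + 3 + 1) * Real.log (1 / (1 + r ^ 2)) with hF_def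
    have hrad := MeasureTheory.integral_fun_norm_addHaar
      (volume : Measure (EuclideanSpace ℝ (Fin (m + 3)))) F
    rw [finrank_euclideanSpace_fin] at hrad
    rw [show (∫ x : EuclideanSpace ℝ (Fin (m + 3)),
        ((1 - ‖x‖ ^ 2) / (1 + ‖x‖ ^ 2) ^ (m + 3 + 1)) * Real.log (1 / (1 + ‖x‖ ^ 2))) =
      ∫ x : EuclideanSpace ℝ (Fin (m + 3)), F ‖x‖ from rfl, hrad]
    have hIoi : ∫ y in Ioi (0:ℝ), y ^ (m + 3 - 1) • F y =
        (1/2) * ∫ v in (0:ℝ)..1, v ^ (((m:ℝ) + 3)/2 - 1) * (1 - v) ^ (((m:ℝ) + 3)/2 - 1) *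
          (2 * v - 1) * Real.log v := by
      have hc := cov_lemma m
      rw [show m + 3 - 1 = m + 2 from rfl]
      rw [show (fun y : ℝ => y ^ (m + 2) • F y) = fun y : ℝ => y ^ (m + 2) •
        ((1 - y ^ 2) / (1 + y ^ 2) ^ (m + 4) * Real.log (1 / (1 + y ^ 2))) from rfl] at *
      rw [hc, ← intervalIntegral.integral_const_mul]
    rw [nsmul_eq_mul, smul_eq_mul, hIoi, key_interval (a := ((m:ℝ) + 3)/2)
      (by have : (0:ℝ) ≤ m := Nat.cast_nonneg m; linarith)]
    have hvol : ((volume (Metric.ball (0 : EuclideanSpace ℝ (Fin (m + 3))) 1)).toReal) =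
        Real.sqrt Real.pi ^ (m + 3) / Real.Gamma (((m + 3 : ℕ) : ℝ) / 2 + 1) := by
      rw [EuclideanSpace.volume_ball, Fintype.card_fin, ENNReal.ofReal_one, one_pow, one_mul,
        ENNReal.toReal_ofReal]
      exact div_nonneg (by positivity)
        (Real.Gamma_pos_of_pos (by positivity : (0:ℝ) < ((m + 3 : ℕ) : ℝ) / 2 + 1)).le
    have hsqrt : Real.sqrt Real.pi ^ (m + 3) = Real.pi ^ (((m + 3 : ℕ) : ℝ) / 2) := by
      rw [Real.sqrt_eq_rpow, ← Real.rpow_natCast (Real.pi ^ ((1:ℝ)/2)) (m + 3),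
        ← Real.rpow_mul Real.pi_pos.le]
      congr 1
      push_cast
      ring
    rw [measureReal_def, hvol, hsqrt]
    have ham : (0:ℝ) ≤ m := Nat.cast_nonneg m
    push_cast
    have hGa : (0:ℝ) < Real.Gamma (((m:ℝ) + 3)/2) := Real.Gamma_pos_of_pos (by linarith)
    have hGN : (0:ℝ) < Real.Gamma ((m:ℝ) + 3) := Real.Gamma_pos_of_pos (by linarith)
    have e2 : Real.Gamma (((m:ℝ) + 3)/2 + 1) = (((m:ℝ) + 3)/2) * Real.Gamma (((m:ℝ) + 3)/2) :=
      Real.Gamma_add_one (by positivity)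
    have e3 : Real.Gamma (2 * (((m:ℝ) + 3)/2) + 1) = ((m:ℝ) + 3) * Real.Gamma ((m:ℝ) + 3) := by
      rw [show (2 * (((m:ℝ) + 3)/2) + 1 : ℝ) = ((m:ℝ) + 3) + 1 by ring,
        Real.Gamma_add_one (by linarith)]
    rw [e2, e3]
    have hne : ((m:ℝ) + 3) ≠ 0 := by linarith
    field_simp
  refine ⟨hmain, ?_⟩
  rw [hmain]
  have ham : (0:ℝ) ≤ m := Nat.cast_nonneg m
  have h1 : (0:ℝ) < Real.pi ^ (((m + 3 : ℕ) : ℝ) / 2) :=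
    Real.rpow_pos_of_pos Real.pi_pos _
  have h2 : (0:ℝ) < Real.Gamma (((m + 3 : ℕ) : ℝ) / 2) :=
    Real.Gamma_pos_of_pos (by push_cast; linarith)
  have h3 : (0:ℝ) < Real.Gamma ((m + 3 : ℕ) : ℝ) :=
    Real.Gamma_pos_of_pos (by push_cast; linarith)
  have h4 : (0:ℝ) < ((m + 3 : ℕ) : ℝ) := by push_cast; linarith
  positivity
end

section
/- For every integer n ≥ 3, ∫_{ℝⁿ} ‖x‖²·(1−‖x‖²)·(1+‖x‖²)^{−(n+1)} dx = −2π^{n/2}·Γ(n/2)/((n−2)·Γ(n)); in particular this integral is strictly negative, so the constant \tilde c₂ = −((n−2)/(4n)) times this integral (appearing in Lemma 5.3 and Theorem 6.3) is strictly positive. (For n = 4 the integral equals −π²/6 = −ω₄/12 and for n = 5 it equals −π³/48, consistent with the value √(3ω₄) and the ratio \tilde c₂/\tilde c₁ = 2/9 computed in the proof of Theorem 6.3.) -/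
open MeasureTheory

open Set Real

private lemma betaReal_integrableOn {s v : ℝ} (hs : 0 < s) (hv : 0 < v) :
    IntegrableOn (fun x : ℝ => x ^ (s - 1) * (1 - x) ^ (v - 1)) (Ioo 0 1) := by
  have hc := Complex.betaIntegral_convergent (u := (s : ℂ)) (v := (v : ℂ)) (by simpa) (by simpa)
  rw [intervalIntegrable_iff_integrableOn_Ioc_of_le zero_le_one] at hc
  have := (hc.mono_set Ioo_subset_Ioc_self).re
  refine IntegrableOn.congr_fun this (fun x hx => ?_) measurableSet_Ioo
  have h1 : ((x : ℂ) ^ ((s : ℂ) - 1)) = ((x ^ (s - 1) : ℝ) : ℂ) := by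
    rw [Complex.ofReal_cpow hx.1.le]; push_cast; ring_nf
  have h2 : ((1 - (x : ℂ)) ^ ((v : ℂ) - 1)) = (((1 - x) ^ (v - 1) : ℝ) : ℂ) := by
    rw [show (1 - (x:ℂ)) = ((1 - x : ℝ) : ℂ) by push_cast; ring,
      Complex.ofReal_cpow (by linarith [hx.2])]
    push_cast; ring_nf
  simp [Function.comp, h1, h2, ← Complex.ofReal_mul]

private lemma betaReal_eq {s v : ℝ} (hs : 0 < s) (hv : 0 < v) :
    ∫ x in Ioo (0:ℝ) 1, x ^ (s - 1) * (1 - x) ^ (v - 1) =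
      Real.Gamma s * Real.Gamma v / Real.Gamma (s + v) := by
  have key := Complex.Gamma_mul_Gamma_eq_betaIntegral (s := (s : ℂ)) (t := (v : ℂ))
    (by simpa) (by simpa)
  have hβ : Complex.betaIntegral (s : ℂ) (v : ℂ) =
      ((∫ x in Ioo (0:ℝ) 1, x ^ (s - 1) * (1 - x) ^ (v - 1) : ℝ) : ℂ) := by
    rw [Complex.betaIntegral, intervalIntegral.integral_of_le zero_le_one,
      integral_Ioc_eq_integral_Ioo]
    rw [show (∫ (t : ℝ) in Ioo (0:ℝ) 1, (t:ℂ) ^ ((s:ℂ) - 1) * (1 - (t:ℂ)) ^ ((v:ℂ) - 1)) =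
        ∫ (t : ℝ) in Ioo (0:ℝ) 1, ((t ^ (s - 1) * (1 - t) ^ (v - 1) : ℝ) : ℂ) from
      setIntegral_congr_fun measurableSet_Ioo (fun x hx => ?_)]
    · exact integral_ofReal
    have h1 : ((x : ℂ) ^ ((s : ℂ) - 1)) = ((x ^ (s - 1) : ℝ) : ℂ) := by
      rw [Complex.ofReal_cpow hx.1.le]; push_cast; ring_nf
    have h2 : ((1 - (x : ℂ)) ^ ((v : ℂ) - 1)) = (((1 - x) ^ (v - 1) : ℝ) : ℂ) := by
      rw [show (1 - (x:ℂ)) = ((1 - x : ℝ) : ℂ) by push_cast; ring,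
        Complex.ofReal_cpow (by linarith [hx.2])]
      push_cast; ring_nf
    simp [h1, h2, ← Complex.ofReal_mul]
  rw [hβ] at key
  have hΓ : (Complex.Gamma ((s : ℂ) + (v : ℂ))) = ((Real.Gamma (s + v) : ℝ) : ℂ) := by
    rw [← Complex.ofReal_add, Complex.Gamma_ofReal]
  have hne : Real.Gamma (s + v) ≠ 0 := (Real.Gamma_pos_of_pos (by linarith)).ne'
  have := key
  rw [Complex.Gamma_ofReal, Complex.Gamma_ofReal, hΓ] at this
  have : ((Real.Gamma s * Real.Gamma v : ℝ) : ℂ) =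
      ((Real.Gamma (s + v) * ∫ x in Ioo (0:ℝ) 1, x ^ (s - 1) * (1 - x) ^ (v - 1) : ℝ) : ℂ) := by
    push_cast; exact this
  have h := Complex.ofReal_injective this
  field_simp
  linarith [h]

private noncomputable def φ : ℝ → ℝ := fun t => t / (1 - t)

private lemma φ_hasDeriv : ∀ t ∈ Ioo (0:ℝ) 1,
    HasDerivWithinAt φ (((1 - t) ^ 2)⁻¹) (Ioo 0 1) t := by
  intro t ht
  have h1 : (1 : ℝ) - t ≠ 0 := by have := ht.2; intro h; linarith [h]
  have := (hasDerivAt_id t).div ((hasDerivAt_const t 1).sub (hasDerivAt_id t)) h1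
  convert this.hasDerivWithinAt using 1
  · rfl
  · rfl
  · rfl
  · show ((1 - t) ^ 2)⁻¹ = (1 * (1 - t) - t * (0 - 1)) / (1 - t) ^ 2
    rw [inv_eq_one_div]; congr 1; ring

private lemma φ_injOn : InjOn φ (Ioo 0 1) := by
  intro t ht t' ht' h
  have h1 : (1 : ℝ) - t ≠ 0 := by have := ht.2; intro h; linarith [h]
  have h2 : (1 : ℝ) - t' ≠ 0 := by have := ht'.2; intro h; linarith [h]
  simp only [φ] at h
  field_simp at h
  nlinarith [h]

private lemma φ_image : φ '' (Ioo 0 1) = Ioi 0 := by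
  ext u
  constructor
  · rintro ⟨t, ht, rfl⟩
    exact div_pos ht.1 (by linarith [ht.2])
  · intro hu
    refine ⟨u / (1 + u), ⟨div_pos hu (by linarith [mem_Ioi.mp hu]), ?_⟩, ?_⟩
    · rw [div_lt_one (by linarith [mem_Ioi.mp hu])]; linarith [mem_Ioi.mp hu]
    · have h1 : (1 : ℝ) + u ≠ 0 := by have := mem_Ioi.mp hu; positivity
      simp only [φ]
      rw [div_eq_iff]
      · field_simp
        ring
      · have hpos : (0:ℝ) < 1 - u/(1+u) := by
          rw [sub_pos, div_lt_one (by linarith [mem_Ioi.mp hu])]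
          linarith [mem_Ioi.mp hu]
        exact hpos.ne'

private lemma subst_eqOn {s b : ℝ} (hs : 0 < s) (hb : s < b) : ∀ t ∈ Ioo (0:ℝ) 1,
    |((1 - t) ^ 2)⁻¹| • (φ t ^ (s - 1) * (1 + φ t) ^ (-b)) =
      t ^ (s - 1) * (1 - t) ^ ((b - s) - 1) := by
  intro t ht
  have ht1 : (0:ℝ) < 1 - t := by linarith [ht.2]
  have h1 : (1:ℝ) + φ t = (1 - t)⁻¹ := by
    simp only [φ]
    field_simp
    ring
  have h2 : φ t ^ (s - 1) = t ^ (s - 1) * ((1 - t) ^ (s - 1))⁻¹ := by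
    rw [φ, Real.div_rpow ht.1.le ht1.le, div_eq_mul_inv]
  have h3 : ((1:ℝ) + φ t) ^ (-b) = (1 - t) ^ b := by
    rw [h1, ← Real.rpow_neg_one (1 - t), ← Real.rpow_mul ht1.le]
    norm_num
  have h4 : |((1 - t) ^ 2)⁻¹| = ((1 - t) ^ (2:ℝ))⁻¹ := by
    rw [abs_of_pos (by positivity), ← Real.rpow_natCast (1-t) 2]; norm_num
  rw [h2, h3, h4, smul_eq_mul, ← Real.rpow_neg ht1.le, ← Real.rpow_neg ht1.le]
  rw [show (1-t) ^ (-(2:ℝ)) * (t ^ (s-1) * (1-t) ^ (-(s-1)) * (1-t) ^ b) =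
      t ^ (s-1) * ((1-t) ^ (-(2:ℝ)) * (1-t) ^ (-(s-1)) * (1-t) ^ b) by ring,
    ← Real.rpow_add ht1, ← Real.rpow_add ht1]
  congr 1
  ring

private lemma subst_integrableOn {s b : ℝ} (hs : 0 < s) (hb : s < b) :
    IntegrableOn (fun u : ℝ => u ^ (s - 1) * (1 + u) ^ (-b)) (Ioi 0) := by
  rw [← φ_image, integrableOn_image_iff_integrableOn_abs_deriv_smul measurableSet_Ioo
    φ_hasDeriv φ_injOn]
  exact ((betaReal_integrableOn hs (by linarith : (0:ℝ) < b - s)).congr_fun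
    (fun t ht => (subst_eqOn hs hb t ht).symm) measurableSet_Ioo)

private lemma subst_integral {s b : ℝ} (hs : 0 < s) (hb : s < b) :
    ∫ u in Ioi (0:ℝ), u ^ (s - 1) * (1 + u) ^ (-b) =
      Real.Gamma s * Real.Gamma (b - s) / Real.Gamma b := by
  rw [← φ_image, integral_image_eq_integral_abs_deriv_smul measurableSet_Ioo
    φ_hasDeriv φ_injOn]
  rw [setIntegral_congr_fun measurableSet_Ioo (subst_eqOn hs hb)]
  rw [betaReal_eq hs (by linarith : (0:ℝ) < b - s)]
  norm_num

private lemma sq_eqOn (a b : ℝ) : ∀ x ∈ Ioi (0:ℝ),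
    x ^ a * (1 + x ^ (2:ℕ)) ^ (-b) =
    (|(2:ℝ)| * x ^ ((2:ℝ) - 1)) •
      ((1/2) * (x ^ (2:ℝ)) ^ ((a + 1)/2 - 1) * (1 + x ^ (2:ℝ)) ^ (-b)) := by
  intro x hx
  have hx' : (0:ℝ) < x := hx
  have h3 : x ^ (2:ℝ) = x ^ (2:ℕ) := by
    rw [← Real.rpow_natCast x 2]; norm_num
  have h2 : (x ^ (2:ℝ)) ^ ((a + 1)/2 - 1) = x ^ (a - 1) := by
    rw [← Real.rpow_mul hx'.le]; congr 1; ring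
  have h1 : x ^ ((2:ℝ) - 1) = x := by norm_num
  have h4 : x * x ^ (a - 1) = x ^ a := by
    nth_rewrite 1 [← Real.rpow_one x]
    rw [← Real.rpow_add hx']; norm_num
  rw [h2, h1, smul_eq_mul, h3, abs_of_pos (by norm_num : (0:ℝ) < 2), ← h4]
  ring

private lemma sq_integral {a b : ℝ} (ha : -1 < a) (hab : a + 1 < 2 * b) :
    ∫ r in Ioi (0:ℝ), r ^ a * (1 + r ^ (2:ℕ)) ^ (-b) =
      Real.Gamma ((a+1)/2) * Real.Gamma (b - (a+1)/2) / (2 * Real.Gamma b) := by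
  have hs : (0:ℝ) < (a+1)/2 := by linarith
  have hsb : (a+1)/2 < b := by linarith
  calc ∫ r in Ioi (0:ℝ), r ^ a * (1 + r ^ (2:ℕ)) ^ (-b)
      = ∫ x in Ioi (0:ℝ), (|(2:ℝ)| * x ^ ((2:ℝ) - 1)) •
          ((1/2) * (x ^ (2:ℝ)) ^ ((a + 1)/2 - 1) * (1 + x ^ (2:ℝ)) ^ (-b)) :=
        setIntegral_congr_fun measurableSet_Ioi (sq_eqOn a b)
    _ = ∫ u in Ioi (0:ℝ), (1/2) * u ^ ((a + 1)/2 - 1) * (1 + u) ^ (-b) :=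
        integral_comp_rpow_Ioi (fun u => (1/2) * u ^ ((a + 1)/2 - 1) * (1 + u) ^ (-b))
          two_ne_zero
    _ = (1/2) * ∫ u in Ioi (0:ℝ), u ^ ((a + 1)/2 - 1) * (1 + u) ^ (-b) := by
        rw [← integral_const_mul]; simp [mul_assoc]
    _ = Real.Gamma ((a+1)/2) * Real.Gamma (b - (a+1)/2) / (2 * Real.Gamma b) := by
        rw [subst_integral hs hsb]; ring

private lemma sq_integrableOn {a b : ℝ} (ha : -1 < a) (hab : a + 1 < 2 * b) :
    IntegrableOn (fun r : ℝ => r ^ a * (1 + r ^ (2:ℕ)) ^ (-b)) (Ioi 0) := by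
  have hs : (0:ℝ) < (a+1)/2 := by linarith
  have hsb : (a+1)/2 < b := by linarith
  have himg : (fun x : ℝ => x ^ (2:ℕ)) '' (Ioi 0) = Ioi 0 := by
    ext u; constructor
    · rintro ⟨x, hx, rfl⟩; exact pow_pos (mem_Ioi.mp hx) 2
    · intro hu
      exact ⟨Real.sqrt u, Real.sqrt_pos.mpr hu,
        by simp only []; rw [sq]; exact Real.mul_self_sqrt (le_of_lt hu)⟩
  have hderiv : ∀ x ∈ Ioi (0:ℝ), HasDerivWithinAt (fun x : ℝ => x ^ (2:ℕ)) (2 * x) (Ioi 0) x := by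
    intro x hx
    simpa using (hasDerivAt_pow 2 x).hasDerivWithinAt
  have hinj : InjOn (fun x : ℝ => x ^ (2:ℕ)) (Ioi 0) := by
    intro x hx y hy h
    simp only at h
    nlinarith [mem_Ioi.mp hx, mem_Ioi.mp hy]
  have H := (integrableOn_image_iff_integrableOn_abs_deriv_smul measurableSet_Ioi hderiv hinj
    (fun u : ℝ => u ^ ((a+1)/2 - 1) * (1 + u) ^ (-b))).mp
  rw [himg] at H
  have H2 := (H (subst_integrableOn hs hsb)).const_mul (1/2 : ℝ)
  refine IntegrableOn.congr_fun H2 (fun x hx => ?_) measurableSet_Ioi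
  have hx' : (0:ℝ) < x := hx
  have h2 : (x ^ (2:ℕ) : ℝ) ^ ((a + 1)/2 - 1) = x ^ (a - 1) := by
    rw [← Real.rpow_natCast x 2, ← Real.rpow_mul hx'.le]; congr 1; ring
  have h4 : x * x ^ (a - 1) = x ^ a := by
    nth_rewrite 1 [← Real.rpow_one x]
    rw [← Real.rpow_add hx']; norm_num
  simp only [smul_eq_mul, h2]
  rw [abs_of_pos (by positivity : (0:ℝ) < 2 * x), ← h4]
  ring

/-- `∫_{ℝⁿ} ‖x‖²·(1−‖x‖²)·(1+‖x‖²)^{−(n+1)} dx = −2π^{n/2}·Γ(n/2)/((n−2)·Γ(n))`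
for `n ≥ 3`; in particular this integral is strictly negative. -/
theorem integral_norm_sq_one_sub_norm_sq_eq_and_neg (n : ℕ) (hn : 3 ≤ n) :
    (∫ x : EuclideanSpace ℝ (Fin n),
        ‖x‖ ^ 2 * (1 - ‖x‖ ^ 2) * (1 + ‖x‖ ^ 2) ^ (-((n : ℝ) + 1))) =
      -(2 * Real.pi ^ ((n : ℝ) / 2) * Real.Gamma ((n : ℝ) / 2) /
        (((n : ℝ) - 2) * Real.Gamma (n : ℝ))) ∧
    (∫ x : EuclideanSpace ℝ (Fin n),
        ‖x‖ ^ 2 * (1 - ‖x‖ ^ 2) * (1 + ‖x‖ ^ 2) ^ (-((n : ℝ) + 1))) < 0 := by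
  have h3n : (3:ℝ) ≤ (n:ℝ) := by exact_mod_cast hn
  have hn2 : (0:ℝ) < (n:ℝ)/2 := by linarith
  have hG : 0 < Real.Gamma ((n:ℝ)/2) := Real.Gamma_pos_of_pos hn2
  have hGn : 0 < Real.Gamma (n:ℝ) := Real.Gamma_pos_of_pos (by linarith)
  have hval : -(2 * Real.pi ^ ((n : ℝ) / 2) * Real.Gamma ((n : ℝ) / 2) /
      (((n : ℝ) - 2) * Real.Gamma (n : ℝ))) < 0 := by
    rw [neg_lt, neg_zero]
    apply div_pos
    · have := Real.rpow_pos_of_pos Real.pi_pos ((n:ℝ)/2)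
      positivity
    · exact mul_pos (by linarith) hGn
  haveI : Nonempty (Fin n) := ⟨⟨0, by omega⟩⟩
  haveI : Nontrivial (EuclideanSpace ℝ (Fin n)) := by
    refine Module.nontrivial_of_finrank_pos (R := ℝ) ?_
    rw [finrank_euclideanSpace_fin]; omega
  have hrad := integral_fun_norm_addHaar (volume : Measure (EuclideanSpace ℝ (Fin n)))
    (fun y : ℝ => y ^ 2 * (1 - y ^ 2) * (1 + y ^ 2) ^ (-((n : ℝ) + 1)))
  rw [finrank_euclideanSpace_fin] at hrad
  have hvol : (volume (Metric.ball (0 : EuclideanSpace ℝ (Fin n)) 1)).toReal =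
      Real.pi ^ ((n:ℝ)/2) / Real.Gamma ((n:ℝ)/2 + 1) := by
    rw [EuclideanSpace.volume_ball]
    simp only [Fintype.card_fin, ENNReal.ofReal_one, one_pow, one_mul]
    rw [ENNReal.toReal_ofReal (by positivity)]
    congr 1
    rw [Real.sqrt_eq_rpow, ← Real.rpow_natCast (Real.pi ^ ((1:ℝ)/2)) n,
      ← Real.rpow_mul Real.pi_pos.le]
    congr 1; ring
  have hsplit : (∫ y in Ioi (0:ℝ), y ^ (n - 1) •
        (y ^ 2 * (1 - y ^ 2) * (1 + y ^ 2) ^ (-((n : ℝ) + 1)))) =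
      (∫ y in Ioi (0:ℝ), y ^ ((n:ℝ) + 1) * (1 + y ^ (2:ℕ)) ^ (-((n:ℝ) + 1))) -
      (∫ y in Ioi (0:ℝ), y ^ ((n:ℝ) + 3) * (1 + y ^ (2:ℕ)) ^ (-((n:ℝ) + 1))) := by
    rw [← integral_sub (sq_integrableOn (by linarith) (by linarith))
      (sq_integrableOn (by linarith) (by linarith))]
    refine setIntegral_congr_fun measurableSet_Ioi (fun y hy => ?_)
    have hy' : (0:ℝ) < y := hy
    have e1 : y ^ ((n:ℝ)+1) = y ^ (n+1 : ℕ) := by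
      rw [show ((n:ℝ)+1) = ((n+1:ℕ):ℝ) by push_cast; ring, Real.rpow_natCast]
    have e3 : y ^ ((n:ℝ)+3) = y ^ (n+3 : ℕ) := by
      rw [show ((n:ℝ)+3) = ((n+3:ℕ):ℝ) by push_cast; ring, Real.rpow_natCast]
    have h1 : y ^ (n-1) * y ^ (2:ℕ) = y ^ (n+1:ℕ) := by
      rw [← pow_add]; congr 1; omega
    have h2 : y ^ (n-1) * y ^ (4:ℕ) = y ^ (n+3:ℕ) := by
      rw [← pow_add]; congr 1; omega
    rw [smul_eq_mul, e1, e3]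
    set c := (1 + y ^ (2:ℕ)) ^ (-((n:ℝ) + 1)) with hc
    linear_combination c * h1 - c * h2
  have hv1 := sq_integral (a := (n:ℝ)+1) (b := (n:ℝ)+1) (by linarith) (by linarith)
  have hv2 := sq_integral (a := (n:ℝ)+3) (b := (n:ℝ)+1) (by linarith) (by linarith)
  have hGa : Real.Gamma ((n:ℝ)/2 + 1) = ((n:ℝ)/2) * Real.Gamma ((n:ℝ)/2) :=
    Real.Gamma_add_one hn2.ne'
  have hGb : Real.Gamma (((n:ℝ)+1+1)/2) = ((n:ℝ)/2) * Real.Gamma ((n:ℝ)/2) := by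
    rw [show ((n:ℝ)+1+1)/2 = (n:ℝ)/2 + 1 by ring]; exact hGa
  have hGc : Real.Gamma (((n:ℝ)+3+1)/2) = ((n:ℝ)/2 + 1) * (((n:ℝ)/2) * Real.Gamma ((n:ℝ)/2)) := by
    rw [show ((n:ℝ)+3+1)/2 = ((n:ℝ)/2 + 1) + 1 by ring, Real.Gamma_add_one (by positivity), hGa]
  have hGd : Real.Gamma ((n:ℝ)+1 - ((n:ℝ)+1+1)/2) = Real.Gamma ((n:ℝ)/2) := by
    congr 1; ring
  have hGe : Real.Gamma ((n:ℝ)+1 - ((n:ℝ)+3+1)/2) = Real.Gamma ((n:ℝ)/2) / ((n:ℝ)/2 - 1) := by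
    have hne : (n:ℝ)/2 - 1 ≠ 0 := by intro h; rw [sub_eq_zero] at h; linarith [h]
    have h : Real.Gamma (((n:ℝ)/2 - 1) + 1) = ((n:ℝ)/2 - 1) * Real.Gamma ((n:ℝ)/2 - 1) :=
      Real.Gamma_add_one hne
    rw [show (n:ℝ)+1 - ((n:ℝ)+3+1)/2 = (n:ℝ)/2 - 1 by ring, eq_div_iff hne, mul_comm, ← h]
    congr 1; ring
  have hGf : Real.Gamma ((n:ℝ)+1) = (n:ℝ) * Real.Gamma (n:ℝ) :=
    Real.Gamma_add_one (by positivity)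
  rw [hGb, hGd, hGf] at hv1
  rw [hGc, hGe, hGf] at hv2
  have main_eq : (∫ x : EuclideanSpace ℝ (Fin n),
      ‖x‖ ^ 2 * (1 - ‖x‖ ^ 2) * (1 + ‖x‖ ^ 2) ^ (-((n : ℝ) + 1))) =
      -(2 * Real.pi ^ ((n : ℝ) / 2) * Real.Gamma ((n : ℝ) / 2) /
        (((n : ℝ) - 2) * Real.Gamma (n : ℝ))) := by
    rw [hrad, hsplit, hv1, hv2, measureReal_def, hvol, hGa, nsmul_eq_mul, smul_eq_mul]
    have hne1 : (n:ℝ) ≠ 0 := by positivity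
    have hne2 : (n:ℝ)/2 - 1 ≠ 0 := by intro h; rw [sub_eq_zero] at h; linarith [h]
    have hne3 : (n:ℝ) - 2 ≠ 0 := by intro h; rw [sub_eq_zero] at h; linarith [h]
    field_simp
    ring
  exact ⟨main_eq, main_eq ▸ hval⟩
end

section
/- Let n ≥ 3 be an integer, λ_i, λ_j > 0 and a_i, a_j ∈ ℝⁿ, and set ε = (λ_j/λ_i + λ_i/λ_j + λ_iλ_j‖a_i−a_j‖²)^{(2−n)/2}. Then the derivative of ε with respect to λ_j and the gradient of ε with respect to a_j satisfy the uniform bounds |λ_j·∂_{λ_j}ε| ≤ ((n−2)/2)·ε and (1/λ_j)·‖∇_{a_j}ε‖ ≤ ((n−2)/2)·ε. (This is the flat-metric, quantitative form of Lemma 2.2 (vii): (λ_j∂_{λ_j}, (1/λ_j)∇_{a_j})ε_{i,j} = O(ε_{i,j}).) -/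
set_option synthInstance.maxHeartbeats 1000000
set_option maxHeartbeats 2000000

/-- For the flat bubble interaction
`ε = (λⱼ/λᵢ + λᵢ/λⱼ + λᵢλⱼ‖aᵢ−aⱼ‖²)^{(2−n)/2}` one has the uniform bounds
`|λⱼ·∂_{λⱼ}ε| ≤ ((n−2)/2)·ε` and `(1/λⱼ)·‖∇_{aⱼ}ε‖ ≤ ((n−2)/2)·ε`. -/
theorem interaction_deriv_bounds (n : ℕ) (hn : 3 ≤ n) (lami lamj : ℝ)
    (hlami : 0 < lami) (hlamj : 0 < lamj) (ai aj : EuclideanSpace ℝ (Fin n)) :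
    DifferentiableAt ℝ
      (fun l : ℝ => (l / lami + lami / l + lami * l * ‖ai - aj‖ ^ 2) ^ ((2 - (n : ℝ)) / 2))
      lamj ∧
    DifferentiableAt ℝ
      (fun b : EuclideanSpace ℝ (Fin n) =>
        (lamj / lami + lami / lamj + lami * lamj * ‖ai - b‖ ^ 2) ^ ((2 - (n : ℝ)) / 2)) aj ∧
    |lamj * deriv
        (fun l : ℝ => (l / lami + lami / l + lami * l * ‖ai - aj‖ ^ 2) ^ ((2 - (n : ℝ)) / 2))
        lamj| ≤
      (((n : ℝ) - 2) / 2) *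
        (lamj / lami + lami / lamj + lami * lamj * ‖ai - aj‖ ^ 2) ^ ((2 - (n : ℝ)) / 2) ∧
    (1 / lamj) * ‖fderiv ℝ
        (fun b : EuclideanSpace ℝ (Fin n) =>
          (lamj / lami + lami / lamj + lami * lamj * ‖ai - b‖ ^ 2) ^ ((2 - (n : ℝ)) / 2))
        aj‖ ≤
      (((n : ℝ) - 2) / 2) *
        (lamj / lami + lami / lamj + lami * lamj * ‖ai - aj‖ ^ 2) ^ ((2 - (n : ℝ)) / 2) := by
  set p : ℝ := (2 - (n : ℝ)) / 2 with hp
  set K : ℝ := ‖ai - aj‖ ^ 2 with hK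
  have hKnn : 0 ≤ K := sq_nonneg _
  set g : ℝ := lamj / lami + lami / lamj + lami * lamj * K with hg
  have hg0 : 0 < g := by
    rw [hg]
    have h1 : 0 < lamj / lami := div_pos hlamj hlami
    have h2 : 0 < lami / lamj := div_pos hlami hlamj
    have h3 : 0 ≤ lami * lamj * K := by positivity
    linarith
  have hn3 : (3 : ℝ) ≤ (n : ℝ) := by exact_mod_cast hn
  have hpabs : |p| = ((n : ℝ) - 2) / 2 := by
    rw [abs_of_nonpos (by rw [hp]; linarith)]
    rw [hp]; ring
  -- derivative in l
  have hgl : HasDerivAt (fun l : ℝ => l / lami + lami / l + lami * l * K)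
      (1 / lami + lami * (-(lamj ^ 2)⁻¹) + lami * K) lamj := by
    have h1 : HasDerivAt (fun l : ℝ => l / lami) (1 / lami) lamj := by
      simpa using (hasDerivAt_id lamj).div_const lami
    have h2 : HasDerivAt (fun l : ℝ => lami / l) (lami * (-(lamj ^ 2)⁻¹)) lamj := by
      simpa [div_eq_mul_inv] using (hasDerivAt_inv hlamj.ne').const_mul lami
    have h3 : HasDerivAt (fun l : ℝ => lami * l * K) (lami * K) lamj := by
      simpa [mul_comm, mul_assoc] using
        (((hasDerivAt_id lamj).const_mul lami).mul_const K)
    exact (h1.add h2).add h3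
  have hF : HasDerivAt
      (fun l : ℝ => (l / lami + lami / l + lami * l * K) ^ p)
      ((1 / lami + lami * (-(lamj ^ 2)⁻¹) + lami * K) * p * g ^ (p - 1)) lamj := by
    have := hgl.rpow_const (p := p) (Or.inl hg0.ne')
    simpa [hg] using this
  have hdiff1 : DifferentiableAt ℝ
      (fun l : ℝ => (l / lami + lami / l + lami * l * K) ^ p) lamj := hF.differentiableAt
  -- fderiv in b
  have hNb : HasFDerivAt (fun b : EuclideanSpace ℝ (Fin n) => ai - b)
      ((0 : EuclideanSpace ℝ (Fin n) →L[ℝ] EuclideanSpace ℝ (Fin n)) -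
        ContinuousLinearMap.id ℝ _) aj :=
    (hasFDerivAt_const ai aj).sub (hasFDerivAt_id aj)
  have hNsq : HasFDerivAt (fun b : EuclideanSpace ℝ (Fin n) => ‖ai - b‖ ^ 2)
      (2 • (innerSL ℝ (ai - aj)).comp
        ((0 : EuclideanSpace ℝ (Fin n) →L[ℝ] EuclideanSpace ℝ (Fin n)) -
          ContinuousLinearMap.id ℝ _)) aj := hNb.norm_sq
  have hGin : HasFDerivAt
      (fun b : EuclideanSpace ℝ (Fin n) => lamj / lami + lami / lamj + lami * lamj * ‖ai - b‖ ^ 2)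
      ((lami * lamj) • (2 • (innerSL ℝ (ai - aj)).comp
        ((0 : EuclideanSpace ℝ (Fin n) →L[ℝ] EuclideanSpace ℝ (Fin n)) -
          ContinuousLinearMap.id ℝ _))) aj :=
    ((hNsq.const_smul (lami * lamj)).const_add (lamj / lami + lami / lamj)).congr_fderiv (by
      ext v; simp [smul_smul]; try ring)
  have hG : HasFDerivAt
      (fun b : EuclideanSpace ℝ (Fin n) =>
        (lamj / lami + lami / lamj + lami * lamj * ‖ai - b‖ ^ 2) ^ p)
      ((p * g ^ (p - 1)) • ((lami * lamj) • (2 • (innerSL ℝ (ai - aj)).comp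
        ((0 : EuclideanSpace ℝ (Fin n) →L[ℝ] EuclideanSpace ℝ (Fin n)) -
          ContinuousLinearMap.id ℝ _)))) aj := by
    have := hGin.rpow_const (p := p) (Or.inl hg0.ne')
    simpa [hg, hK] using this
  have hdiff2 := hG.differentiableAt
  refine ⟨hdiff1, hdiff2, ?_, ?_⟩
  · -- bound for the l-derivative
    rw [hF.deriv]
    have hcore : |lamj * (1 / lami + lami * (-(lamj ^ 2)⁻¹) + lami * K)| ≤ g := by
      have heq : lamj * (1 / lami + lami * (-(lamj ^ 2)⁻¹) + lami * K)
          = lamj / lami - lami / lamj + lami * lamj * K := by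
        field_simp; ring
      rw [heq, abs_le]
      have h1 : 0 < lamj / lami := div_pos hlamj hlami
      have h2 : 0 < lami / lamj := div_pos hlami hlamj
      have h3 : 0 ≤ lami * lamj * K := by positivity
      constructor <;> [skip; skip] <;> rw [hg] <;> linarith
    have hrw : g ^ (p - 1) = g ^ p / g := by
      rw [Real.rpow_sub hg0, Real.rpow_one]
    calc |lamj * ((1 / lami + lami * (-(lamj ^ 2)⁻¹) + lami * K) * p * g ^ (p - 1))|
        = |lamj * (1 / lami + lami * (-(lamj ^ 2)⁻¹) + lami * K)| * |p| * (g ^ (p - 1)) := by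
          rw [show lamj * ((1 / lami + lami * (-(lamj ^ 2)⁻¹) + lami * K) * p * g ^ (p - 1))
              = lamj * (1 / lami + lami * (-(lamj ^ 2)⁻¹) + lami * K) * p * g ^ (p - 1) by ring,
            abs_mul, abs_mul, abs_of_nonneg (Real.rpow_nonneg hg0.le (p - 1))]
      _ ≤ g * (((n : ℝ) - 2) / 2) * (g ^ p / g) := by
          rw [hpabs, hrw]
          have hb : 0 ≤ g ^ p / g := by positivity
          have hpnn : (0:ℝ) ≤ ((n : ℝ) - 2) / 2 := by linarith
          exact mul_le_mul_of_nonneg_right (mul_le_mul_of_nonneg_right hcore hpnn) hb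
      _ = (((n : ℝ) - 2) / 2) * g ^ p := by
          field_simp
  · -- bound for the fderiv in b
    rw [hG.fderiv]
    have hnorm : ‖(p * g ^ (p - 1)) • ((lami * lamj) • (2 • (innerSL ℝ (ai - aj)).comp
        ((0 : EuclideanSpace ℝ (Fin n) →L[ℝ] EuclideanSpace ℝ (Fin n)) -
          ContinuousLinearMap.id ℝ _)))‖
        ≤ |p| * g ^ (p - 1) * (lami * lamj) * (2 * ‖ai - aj‖) := by
      set L := (innerSL ℝ (ai - aj)).comp
        ((0 : EuclideanSpace ℝ (Fin n) →L[ℝ] EuclideanSpace ℝ (Fin n)) -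
          ContinuousLinearMap.id ℝ _) with hL
      have hcomp : ‖L‖ ≤ ‖ai - aj‖ := by
        rw [hL]
        refine le_trans (ContinuousLinearMap.opNorm_comp_le _ _) ?_
        have h1 : ‖innerSL ℝ (ai - aj)‖ = ‖ai - aj‖ := innerSL_apply_norm (𝕜 := ℝ) (ai - aj)
        have h2 : ‖(0 : EuclideanSpace ℝ (Fin n) →L[ℝ] EuclideanSpace ℝ (Fin n)) -
            ContinuousLinearMap.id ℝ _‖ ≤ 1 := by
          rw [zero_sub, norm_neg]
          exact ContinuousLinearMap.norm_id_le
        calc ‖innerSL ℝ (ai - aj)‖ * ‖(0 : EuclideanSpace ℝ (Fin n) →L[ℝ]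
              EuclideanSpace ℝ (Fin n)) - ContinuousLinearMap.id ℝ _‖
            ≤ ‖ai - aj‖ * 1 := by rw [h1]; exact mul_le_mul_of_nonneg_left h2 (norm_nonneg _)
          _ = ‖ai - aj‖ := mul_one _
      have h2L : ‖(2 : ℕ) • L‖ ≤ 2 * ‖ai - aj‖ := by
        rw [two_smul]
        calc ‖L + L‖ ≤ ‖L‖ + ‖L‖ := norm_add_le _ _
          _ ≤ 2 * ‖ai - aj‖ := by linarith
      have habs : ‖p * g ^ (p - 1)‖ = |p| * g ^ (p - 1) := by
        rw [Real.norm_eq_abs, abs_mul, abs_of_nonneg (Real.rpow_nonneg hg0.le _)]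
      have hll : ‖lami * lamj‖ = lami * lamj := by
        rw [Real.norm_eq_abs, abs_of_pos (mul_pos hlami hlamj)]
      calc ‖(p * g ^ (p - 1)) • ((lami * lamj) • ((2 : ℕ) • L))‖
          ≤ ‖p * g ^ (p - 1)‖ * ‖(lami * lamj) • ((2 : ℕ) • L)‖ := norm_smul_le (p * g ^ (p - 1)) ((lami * lamj) • ((2 : ℕ) • L))
        _ ≤ ‖p * g ^ (p - 1)‖ * (‖lami * lamj‖ * ‖(2 : ℕ) • L‖) := by
            have := norm_smul_le (lami * lamj) ((2 : ℕ) • L)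
            have hnn : (0:ℝ) ≤ ‖p * g ^ (p - 1)‖ := norm_nonneg _
            exact mul_le_mul_of_nonneg_left this hnn
        _ ≤ |p| * g ^ (p - 1) * (lami * lamj * (2 * ‖ai - aj‖)) := by
            rw [habs, hll]
            have hnn : (0:ℝ) ≤ |p| * g ^ (p - 1) := by positivity
            have hnn2 : (0:ℝ) ≤ lami * lamj := (mul_pos hlami hlamj).le
            exact mul_le_mul_of_nonneg_left (mul_le_mul_of_nonneg_left h2L hnn2) hnn
        _ = |p| * g ^ (p - 1) * (lami * lamj) * (2 * ‖ai - aj‖) := by ring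
    have hamgm : 2 * lami * ‖ai - aj‖ ≤ g := by
      have key : lami / lamj + lami * lamj * K - 2 * lami * ‖ai - aj‖
          = (lami / lamj) * (1 - lamj * ‖ai - aj‖) ^ 2 := by
        rw [hK]; field_simp; ring
      have hnn : 0 ≤ (lami / lamj) * (1 - lamj * ‖ai - aj‖) ^ 2 := by positivity
      have h1 : 0 < lamj / lami := div_pos hlamj hlami
      rw [hg]; nlinarith [key]
    have hrw : g ^ (p - 1) = g ^ p / g := by
      rw [Real.rpow_sub hg0, Real.rpow_one]
    calc (1 / lamj) * ‖_‖
        ≤ (1 / lamj) * (|p| * g ^ (p - 1) * (lami * lamj) * (2 * ‖ai - aj‖)) := by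
          have : (0:ℝ) ≤ 1 / lamj := by positivity
          gcongr
      _ = |p| * (g ^ (p - 1) * (2 * lami * ‖ai - aj‖)) := by
          field_simp
      _ ≤ |p| * (g ^ (p - 1) * g) := by
          have : (0:ℝ) ≤ g ^ (p - 1) := Real.rpow_nonneg hg0.le _
          gcongr
      _ = (((n : ℝ) - 2) / 2) * g ^ p := by
          rw [hpabs, hrw]; field_simp
end
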